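/- Let f : ℝ^d → ℝ be (H0,H1)-smooth with H0, H1 > 0 and f* := inf f > −∞, and run GD with warm-up step size: x^{k+1} = x^k − η_k ∇f(x^k), where η_k = θ·min{1/H0, 1/(3H1·F_k)}, F_k := f(x^k) − f*, and θ ∈ (0, 3/4]. Then for every k, F_{k+1} ≤ F_k − (η_k/2)‖∇f(x^k)‖². In particular, the sequence (F_k) is non-increasing. -/

import Mathlib

open scoped RealInnerProductSpace

noncomputable section

lemma descent_aux {d : ℕ} (f : EuclideanSpace ℝ (Fin d) → ℝ)
    (f' : EuclideanSpace ℝ (Fin d) → EuclideanSpace ℝ (Fin d)) (L : ℝ)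
    (hgrad : ∀ y, HasGradientAt f (f' y) y)
    (y z : EuclideanSpace ℝ (Fin d))
    (hlip : ∀ w : EuclideanSpace ℝ (Fin d), ‖w - y‖ ≤ ‖z - y‖ →
      ‖f' w - f' y‖ ≤ L * ‖w - y‖) :
    f z ≤ f y + ⟪f' y, z - y⟫ + L / 2 * ‖z - y‖ ^ 2 := by
  set v := z - y with hv
  set g : ℝ → ℝ := fun t => f (y + t • v) - t * ⟪f' y, v⟫ - L / 2 * t ^ 2 * ‖v‖ ^ 2 with hg
  have hderiv : ∀ t : ℝ, HasDerivAt g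
      (⟪f' (y + t • v), v⟫ - ⟪f' y, v⟫ - L * t * ‖v‖ ^ 2) t := by
    intro t
    have hline : HasDerivAt (fun t : ℝ => y + t • v) v t := by
      simpa using (hasDerivAt_id t).smul_const v |>.const_add y
    have h1 : HasDerivAt (fun t : ℝ => f (y + t • v)) ⟪f' (y + t • v), v⟫ t := by
      have := (hgrad (y + t • v)).hasFDerivAt.comp_hasDerivAt t hline
      simpa [InnerProductSpace.toDual_apply_apply, Function.comp_def] using this
    have h2 : HasDerivAt (fun t : ℝ => t * ⟪f' y, v⟫) ⟪f' y, v⟫ t := by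
      simpa using (hasDerivAt_id t).mul_const ⟪f' y, v⟫
    have h3 : HasDerivAt (fun t : ℝ => L / 2 * t ^ 2 * ‖v‖ ^ 2) (L * t * ‖v‖ ^ 2) t := by
      have := ((hasDerivAt_pow 2 t).const_mul (L / 2)).mul_const (‖v‖ ^ 2)
      refine this.congr_deriv ?_
      ring
    exact (h1.sub h2).sub h3
  have hmono : AntitoneOn g (Set.Icc (0:ℝ) 1) := by
    apply antitoneOn_of_deriv_nonpos (convex_Icc 0 1)
    · exact fun t _ => ((hderiv t).continuousAt).continuousWithinAt
    · exact fun t _ => ((hderiv t).differentiableAt).differentiableWithinAt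
    · intro t ht
      rw [interior_Icc] at ht
      rw [(hderiv t).deriv]
      have hb : ‖f' (y + t • v) - f' y‖ ≤ L * (t * ‖v‖) := by
        have := hlip (y + t • v) (by
          simp only [add_sub_cancel_left, norm_smul, Real.norm_eq_abs]
          rw [abs_of_nonneg ht.1.le]
          nlinarith [norm_nonneg v, ht.1, ht.2])
        simpa [norm_smul, abs_of_nonneg ht.1.le] using this
      have hinner : ⟪f' (y + t • v) - f' y, v⟫ ≤ ‖f' (y + t • v) - f' y‖ * ‖v‖ :=
        real_inner_le_norm _ _
      rw [inner_sub_left] at hinner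
      nlinarith [norm_nonneg v, norm_nonneg (f' (y + t • v) - f' y), ht.1]
  have h01 := hmono (Set.left_mem_Icc.2 zero_le_one) (Set.right_mem_Icc.2 zero_le_one) zero_le_one
  simp only [hg] at h01
  have : y + (1:ℝ) • v = z := by simp [hv]
  rw [this] at h01
  simp only [zero_smul, add_zero, zero_mul, one_mul, one_pow] at h01
  linarith

/-- Basic descent for GD with warm-up step size on an
`(H0,H1)`-smooth function (`H0, H1 > 0`, bounded below): with
`η_k = θ·min{1/H0, 1/(3H1 F_k)} = θ / max{H0, 3H1 F_k}` (the latter form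
incorporates the convention `η_k = θ/H0` when `F_k = 0`) and `θ ∈ (0, 3/4]`,
`F_{k+1} ≤ F_k - (η_k/2)‖∇f(x^k)‖²`; in particular `(F_k)` is non-increasing. -/
theorem gd_warmup_basic_descent
    {d : ℕ}
    (f : EuclideanSpace ℝ (Fin d) → ℝ)
    (f' : EuclideanSpace ℝ (Fin d) → EuclideanSpace ℝ (Fin d))
    (H0 H1 θ : ℝ)
    (x : ℕ → EuclideanSpace ℝ (Fin d))
    (hH0 : 0 < H0) (hH1 : 0 < H1)
    (hθ0 : 0 < θ) (hθ1 : θ ≤ 3 / 4)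
    (hgrad : ∀ y, HasGradientAt f (f' y) y)
    (hbdd : BddBelow (Set.range f))
    (hsmooth : ∀ y z : EuclideanSpace ℝ (Fin d),
      Real.sqrt H1 * ‖z - y‖ ≤ 1 →
      ‖f' z - f' y‖ ≤ (H0 + H1 * (f y - ⨅ w, f w)) * ‖z - y‖)
    -- GD with warm-up step size
    (hupdate : ∀ k, x (k + 1) =
      x k - (θ / max H0 (3 * H1 * (f (x k) - ⨅ w, f w))) • f' (x k)) :
    (∀ k, f (x (k + 1)) - ⨅ w, f w ≤
      (f (x k) - ⨅ w, f w) -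
        (θ / max H0 (3 * H1 * (f (x k) - ⨅ w, f w))) / 2 * ‖f' (x k)‖ ^ 2) ∧
    (∀ k, f (x (k + 1)) - ⨅ w, f w ≤ f (x k) - ⨅ w, f w) := by
  set fstar := ⨅ w, f w with hfstar
  have hinf : ∀ w, fstar ≤ f w := fun w => ciInf_le hbdd w
  set s := Real.sqrt H1 with hs
  have hs0 : 0 < s := Real.sqrt_pos.2 hH1
  have hs2 : s ^ 2 = H1 := Real.sq_sqrt hH1.le
  have key : ∀ k, f (x (k + 1)) - fstar ≤
      (f (x k) - fstar) - (θ / max H0 (3 * H1 * (f (x k) - fstar))) / 2 * ‖f' (x k)‖ ^ 2 := by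
    intro k
    set F := f (x k) - fstar with hF
    have hF0 : 0 ≤ F := sub_nonneg.2 (hinf (x k))
    set L := H0 + H1 * F with hL
    set M := max H0 (3 * H1 * F) with hM
    have hM0 : 0 < M := lt_max_of_lt_left hH0
    have hH0M : H0 ≤ M := le_max_left _ _
    have h3M : 3 * H1 * F ≤ M := le_max_right _ _
    have hLM : L ≤ 4 / 3 * M := by rw [hL]; nlinarith
    have hL0 : 0 < L := by positivity
    set g := f' (x k) with hg
    -- gradient bound
    have hgb : ‖g‖ ≤ 4 / 3 * M / s := by
      by_cases hcase : ‖g‖ ≤ L / s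
      · refine hcase.trans ?_
        gcongr
      · push_neg at hcase
        have hgpos : 0 < ‖g‖ := lt_of_le_of_lt (by positivity) hcase
        set r := 1 / (s * ‖g‖) with hr
        have hr0 : 0 < r := by positivity
        set z := x k - r • g with hz
        have hzx : z - x k = -(r • g) := by rw [hz]; abel
        have hnz : ‖z - x k‖ = 1 / s := by
          rw [hzx, norm_neg, norm_smul, Real.norm_eq_abs, abs_of_pos hr0, hr]
          field_simp
          try ring
        have hdes := descent_aux f f' L hgrad (x k) z (by
          intro w hw
          apply hsmooth
          rw [hnz] at hw
          calc s * ‖w - x k‖ ≤ s * (1 / s) := by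
                exact mul_le_mul_of_nonneg_left hw hs0.le
            _ = 1 := by field_simp)
        have hip : ⟪g, z - x k⟫ = -(r * ‖g‖ ^ 2) := by
          rw [hzx, inner_neg_right, real_inner_smul_right, real_inner_self_eq_norm_sq]
          try ring
        rw [hip, hnz] at hdes
        have hfz := hinf z
        have hrg : r * ‖g‖ ^ 2 = ‖g‖ / s := by
          rw [hr]; field_simp; try ring
        rw [hrg] at hdes
        -- fstar ≤ f(xk) - ‖g‖/s + L/2 * (1/s)^2
        have h1 : fstar ≤ f (x k) - ‖g‖ / s + L / 2 * (1 / s) ^ 2 := by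
          refine le_trans hfz (hdes.trans_eq ?_)
          ring
        have heq : L / 2 * (1 / s) ^ 2 = L / (2 * H1) := by
          rw [div_pow, one_pow, hs2]; ring
        have h2 : ‖g‖ / s ≤ F + L / (2 * H1) := by
          rw [heq] at h1
          rw [hF]
          linarith
        clear_value g L M F s fstar
        rw [div_le_iff₀ hs0] at h2
        have hmul : s * s = H1 := by rw [← hs2, sq]
        rw [le_div_iff₀ hs0]
        calc ‖g‖ * s ≤ ((F + L / (2 * H1)) * s) * s := mul_le_mul_of_nonneg_right h2 hs0.le
          _ = (F + L / (2 * H1)) * H1 := by rw [mul_assoc, hmul]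
          _ = F * H1 + L / 2 := by field_simp; try ring
          _ = 3 * H1 * F / 3 + L / 2 := by ring
          _ ≤ 4 / 3 * M := by linarith [h3M, hLM, hM0]
    -- main descent step
    set η := θ / M with hη
    have hη0 : 0 < η := div_pos hθ0 hM0
    have hco : θ / max H0 (3 * H1 * (f (x k) - fstar)) = η := rfl
    have hstep : x (k + 1) - x k = -(η • g) := by
      rw [hupdate k, hco, ← hg, sub_sub_cancel_left]
    have hsb : ‖x (k + 1) - x k‖ ≤ 1 / s := by
      rw [hstep, norm_neg, norm_smul, Real.norm_eq_abs, abs_of_pos hη0]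
      have heq2 : η * (4 / 3 * M / s) = 4 / 3 * θ / s := by
        rw [hη]; field_simp
      calc η * ‖g‖ ≤ η * (4 / 3 * M / s) := mul_le_mul_of_nonneg_left hgb hη0.le
        _ = 4 / 3 * θ / s := heq2
        _ ≤ 1 / s := by gcongr; linarith
    have hdes := descent_aux f f' L hgrad (x k) (x (k + 1)) (by
      intro w hw
      apply hsmooth
      calc s * ‖w - x k‖ ≤ s * (1 / s) :=
            mul_le_mul_of_nonneg_left (hw.trans hsb) hs0.le
        _ = 1 := by field_simp)
    have hip : ⟪g, x (k + 1) - x k⟫ = -(η * ‖g‖ ^ 2) := by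
      rw [hstep, inner_neg_right, real_inner_smul_right, real_inner_self_eq_norm_sq]
      try ring
    have hnn : ‖x (k + 1) - x k‖ ^ 2 = η ^ 2 * ‖g‖ ^ 2 := by
      rw [hstep, norm_neg, norm_smul, Real.norm_eq_abs, abs_of_pos hη0, mul_pow]
    rw [hip, hnn] at hdes
    have hMη : M * η = θ := by
      rw [hη, mul_div_cancel₀ _ hM0.ne']
    clear_value g η M L F s fstar
    have hLη : L * η ≤ 1 := by
      have h5 : L * η ≤ 4 / 3 * M * η := mul_le_mul_of_nonneg_right hLM hη0.le
      linarith [h5, hMη, hθ1]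
    have h6 : L * η * (η * ‖g‖ ^ 2) ≤ 1 * (η * ‖g‖ ^ 2) :=
      mul_le_mul_of_nonneg_right hLη (mul_nonneg hη0.le (sq_nonneg _))
    have hfin : f (x (k + 1)) ≤ f (x k) - η / 2 * ‖g‖ ^ 2 := by
      linarith [hdes, h6, hη0]
    linarith [hfin]
  refine ⟨key, fun k => ?_⟩
  have := key k
  have hM0 : (0:ℝ) < max H0 (3 * H1 * (f (x k) - fstar)) := lt_max_of_lt_left hH0
  have h7 : (0:ℝ) ≤ θ / max H0 (3 * H1 * (f (x k) - fstar)) / 2 * ‖f' (x k)‖ ^ 2 := by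
    positivity
  clear_value fstar
  linarith [this, h7]

end
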